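/- Let f, g : ℕ → ℕ with g(k) ≥ 1 for all k, and suppose there exists a real ε > 0 such that (1+ε)·g(k) ≤ f(k) for all k. Then for every natural number n ≥ 1, 𝔠(n·f, g) = 𝔠(f,g), where (n·f)(k) = n·f(k). -/

import Mathlib

/-- `B` is a `g`-slalom: a sequence of finite sets of naturals with `|B k| = g k`. -/
def IsSlalom (g : ℕ → ℕ) (B : ℕ → Finset ℕ) : Prop := ∀ k, (B k).card = g k

/-- `x` is covered by the slalom `B`. -/
def Covers (B : ℕ → Finset ℕ) (x : ℕ → ℕ) : Prop := ∀ k, x k ∈ B k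

/-- `slalomCov f g` is the least cardinality of a family of `g`-slaloms covering
every `x : ℕ → ℕ` with `x k < f k` for all `k`. -/
noncomputable def slalomCov (f g : ℕ → ℕ) : Cardinal :=
  sInf { c : Cardinal | ∃ 𝓑 : Set (ℕ → Finset ℕ),
    (∀ B ∈ 𝓑, IsSlalom g B) ∧
    (∀ x : ℕ → ℕ, (∀ k, x k < f k) → ∃ B ∈ 𝓑, Covers B x) ∧
    c = Cardinal.mk 𝓑 }

open Cardinal

/-! ### Auxiliary machinery -/

/-- Pad a finset of naturals up to cardinality `m`. -/
noncomputable def padTo (S : Finset ℕ) (m : ℕ) : Finset ℕ :=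
  if h : S.card ≤ m then (Infinite.exists_superset_card_eq S m h).choose else S

lemma padTo_subset {S : Finset ℕ} {m : ℕ} (h : S.card ≤ m) : S ⊆ padTo S m := by
  rw [padTo, dif_pos h]
  exact (Infinite.exists_superset_card_eq S m h).choose_spec.1

lemma padTo_card {S : Finset ℕ} {m : ℕ} (h : S.card ≤ m) : (padTo S m).card = m := by
  rw [padTo, dif_pos h]
  exact (Infinite.exists_superset_card_eq S m h).choose_spec.2

/-- Decoding function: given the slalom `B`, decode the combined value `j` at
coordinate `k`.  Values `j < (B k).card` decode to the `j`-th element of `B k`;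
larger values decode to an overflow value `f k + (j - g k)`. -/
noncomputable def decFun (f g : ℕ → ℕ) (B : ℕ → Finset ℕ) (k j : ℕ) : ℕ :=
  if h : j < (B k).card then ((B k).equivFin.symm ⟨j, h⟩ : ℕ) else f k + (j - g k)

/-- The combined slalom built from `B` and `C`. -/
noncomputable def combSlalom (f g : ℕ → ℕ) (B C : ℕ → Finset ℕ) : ℕ → Finset ℕ :=
  fun k => padTo ((C k).image (decFun f g B k)) (g k)

lemma covSet_nonempty (f g : ℕ → ℕ) (hg : ∀ k, 1 ≤ g k) :
    { c : Cardinal | ∃ 𝓑 : Set (ℕ → Finset ℕ),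
      (∀ B ∈ 𝓑, IsSlalom g B) ∧
      (∀ x : ℕ → ℕ, (∀ k, x k < f k) → ∃ B ∈ 𝓑, Covers B x) ∧
      c = Cardinal.mk 𝓑 }.Nonempty := by
  refine ⟨Cardinal.mk {B : ℕ → Finset ℕ | IsSlalom g B},
    {B : ℕ → Finset ℕ | IsSlalom g B}, fun B hB => hB, ?_, rfl⟩
  intro x _
  refine ⟨fun k => (Finset.range (g k)).image (fun j => x k + j), ?_, ?_⟩
  · intro k
    rw [Finset.card_image_of_injective _ (add_right_injective _), Finset.card_range]
  · intro k
    rw [Finset.mem_image]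
    exact ⟨0, Finset.mem_range.mpr (hg k), by simp⟩

lemma slalomCov_le (f g : ℕ → ℕ) {𝓑 : Set (ℕ → Finset ℕ)}
    (h1 : ∀ B ∈ 𝓑, IsSlalom g B)
    (h2 : ∀ x : ℕ → ℕ, (∀ k, x k < f k) → ∃ B ∈ 𝓑, Covers B x) :
    slalomCov f g ≤ Cardinal.mk 𝓑 :=
  csInf_le' ⟨𝓑, h1, h2, rfl⟩

lemma exists_min_family (f g : ℕ → ℕ) (hg : ∀ k, 1 ≤ g k) :
    ∃ 𝓑 : Set (ℕ → Finset ℕ), (∀ B ∈ 𝓑, IsSlalom g B) ∧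
      (∀ x : ℕ → ℕ, (∀ k, x k < f k) → ∃ B ∈ 𝓑, Covers B x) ∧
      Cardinal.mk 𝓑 = slalomCov f g := by
  obtain ⟨𝓑, h1, h2, h3⟩ := csInf_mem (covSet_nonempty f g hg)
  exact ⟨𝓑, h1, h2, h3.symm⟩

/-- Any covering family for `(f, g)` with `g k < f k` must be infinite. -/
lemma aleph0_le_family (f g : ℕ → ℕ) (hfg : ∀ k, g k < f k) {𝓑 : Set (ℕ → Finset ℕ)}
    (h1 : ∀ B ∈ 𝓑, IsSlalom g B)
    (h2 : ∀ x : ℕ → ℕ, (∀ k, x k < f k) → ∃ B ∈ 𝓑, Covers B x) :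
    ℵ₀ ≤ Cardinal.mk 𝓑 := by
  classical
  by_contra hlt
  push_neg at hlt
  have hfin : 𝓑.Finite := Cardinal.lt_aleph0_iff_set_finite.mp hlt
  set L := hfin.toFinset.toList with hL
  have hsub : ∀ b, b ∈ L → b ∈ 𝓑 := by
    intro b hb
    rw [hL, Finset.mem_toList] at hb
    exact hfin.mem_toFinset.mp hb
  set Bat : ℕ → (ℕ → Finset ℕ) := fun k => L.getD k (fun _ => ∅) with hBat
  have key : ∀ k, ∃ a, a < f k ∧ a ∉ Bat k k := by
    intro k
    by_cases hk : k < L.length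
    · have hmem : Bat k ∈ 𝓑 := by
        have hget : Bat k = L.get ⟨k, hk⟩ := List.getD_eq_get L _ ⟨k, hk⟩
        rw [hget]
        exact hsub _ (List.get_mem L ⟨k, hk⟩)
      have hsl := h1 _ hmem
      have hns : ¬ (Finset.range (f k) ⊆ Bat k k) := by
        intro hsub
        have hc := Finset.card_le_card hsub
        rw [Finset.card_range, hsl k] at hc
        exact absurd hc (Nat.not_le.mpr (hfg k))
      obtain ⟨a, ha, hna⟩ := Finset.not_subset.mp hns
      exact ⟨a, Finset.mem_range.mp ha, hna⟩
    · have hdef : Bat k = fun _ => ∅ := List.getD_eq_default L _ (le_of_not_gt hk)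
      refine ⟨0, lt_of_le_of_lt (Nat.zero_le _) (hfg k), ?_⟩
      rw [hdef]
      simp
  choose xa hxa1 hxa2 using key
  obtain ⟨B, hB, hcov⟩ := h2 xa hxa1
  have hBL : B ∈ L := by
    rw [hL, Finset.mem_toList]
    exact hfin.mem_toFinset.mpr hB
  obtain ⟨i, hi⟩ := List.mem_iff_get.mp hBL
  have hBi : Bat (i : ℕ) = B := by
    rw [hBat]
    have := List.getD_eq_get L (fun _ => (∅ : Finset ℕ)) ⟨i, i.isLt⟩
    simp only [this]
    rw [show (⟨(i : ℕ), i.isLt⟩ : Fin L.length) = i from Fin.eta i i.isLt]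
    exact hi
  have hne := hxa2 (i : ℕ)
  rw [hBi] at hne
  exact hne (hcov (i : ℕ))

/-- The key step: reduce covering functions bounded by `g + t` to covering
functions bounded by `g + (t - (f - g))`, at the cost of one factor of `𝓑`. -/
lemma step_lemma (f g : ℕ → ℕ) (hfg : ∀ k, g k < f k)
    (𝓑 : Set (ℕ → Finset ℕ)) (hB1 : ∀ B ∈ 𝓑, IsSlalom g B)
    (hB2 : ∀ x : ℕ → ℕ, (∀ k, x k < f k) → ∃ B ∈ 𝓑, Covers B x)
    (t : ℕ → ℕ)
    (𝓒 : Set (ℕ → Finset ℕ)) (hC1 : ∀ C ∈ 𝓒, IsSlalom g C)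
    (hC2 : ∀ x : ℕ → ℕ, (∀ k, x k < g k + (t k - (f k - g k))) → ∃ C ∈ 𝓒, Covers C x) :
    ∃ 𝓓 : Set (ℕ → Finset ℕ), (∀ D ∈ 𝓓, IsSlalom g D) ∧
      (∀ x : ℕ → ℕ, (∀ k, x k < g k + t k) → ∃ D ∈ 𝓓, Covers D x) ∧
      Cardinal.mk 𝓓 ≤ Cardinal.mk 𝓑 * Cardinal.mk 𝓒 := by
  classical
  refine ⟨{D | ∃ B ∈ 𝓑, ∃ C ∈ 𝓒, D = combSlalom f g B C}, ?_, ?_, ?_⟩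
  · rintro D ⟨B, _, C, hC, rfl⟩ k
    have hcard : (((C k).image (decFun f g B k))).card ≤ g k :=
      le_trans Finset.card_image_le (le_of_eq (hC1 C hC k))
    exact padTo_card hcard
  · intro x hx
    set y : ℕ → ℕ := fun k => if x k < f k then x k else 0 with hy
    have hyf : ∀ k, y k < f k := by
      intro k
      by_cases hk : x k < f k
      · simpa [hy, hk] using hk
      · simp only [hy, if_neg hk]
        exact lt_of_le_of_lt (Nat.zero_le _) (hfg k)
    obtain ⟨B, hB, hBy⟩ := hB2 y hyf
    have hmem : ∀ k, x k < f k → x k ∈ B k := by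
      intro k hk
      have := hBy k
      simpa [hy, if_pos hk] using this
    set v : ℕ → ℕ := fun k => if hk : x k < f k
        then ((B k).equivFin ⟨x k, hmem k hk⟩ : ℕ)
        else g k + (x k - f k) with hv
    have hvlt : ∀ k, v k < g k + (t k - (f k - g k)) := by
      intro k
      by_cases hk : x k < f k
      · have hlt : ((B k).equivFin ⟨x k, hmem k hk⟩ : ℕ) < (B k).card :=
          ((B k).equivFin ⟨x k, hmem k hk⟩).isLt
        have hcard := hB1 B hB k
        simp only [hv, dif_pos hk]
        omega
      · simp only [hv, dif_neg hk]
        have h1 := hx k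
        have h2 := hfg k
        have h3 : f k ≤ x k := le_of_not_gt hk
        omega
    obtain ⟨C, hC, hCv⟩ := hC2 v hvlt
    refine ⟨combSlalom f g B C, ⟨B, hB, C, hC, rfl⟩, ?_⟩
    intro k
    have hcard : (((C k).image (decFun f g B k))).card ≤ g k :=
      le_trans Finset.card_image_le (le_of_eq (hC1 C hC k))
    apply padTo_subset hcard
    rw [Finset.mem_image]
    refine ⟨v k, hCv k, ?_⟩
    by_cases hk : x k < f k
    · simp only [hv, dif_pos hk, decFun]
      have hlt : ((B k).equivFin ⟨x k, hmem k hk⟩ : ℕ) < (B k).card :=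
        ((B k).equivFin ⟨x k, hmem k hk⟩).isLt
      rw [dif_pos hlt]
      have heq : (⟨((B k).equivFin ⟨x k, hmem k hk⟩ : ℕ), hlt⟩ : Fin (B k).card)
          = (B k).equivFin ⟨x k, hmem k hk⟩ := by
        apply Fin.ext
        rfl
      rw [heq, Equiv.symm_apply_apply]
    · simp only [hv, dif_neg hk, decFun]
      have h3 : f k ≤ x k := le_of_not_gt hk
      have hge : ¬ (g k + (x k - f k) < (B k).card) := by
        rw [hB1 B hB k]
        omega
      rw [dif_neg hge]
      omega
  · have hsurj : Function.Surjective
        (fun p : ↥𝓑 × ↥𝓒 =>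
          (⟨combSlalom f g p.1 p.2, ⟨p.1, p.1.2, p.2, p.2.2, rfl⟩⟩ :
            ↥{D | ∃ B ∈ 𝓑, ∃ C ∈ 𝓒, D = combSlalom f g B C})) := by
      rintro ⟨D, B, hB, C, hC, rfl⟩
      exact ⟨(⟨B, hB⟩, ⟨C, hC⟩), rfl⟩
    calc Cardinal.mk ↥{D | ∃ B ∈ 𝓑, ∃ C ∈ 𝓒, D = combSlalom f g B C}
        ≤ Cardinal.mk (↥𝓑 × ↥𝓒) := Cardinal.mk_le_of_surjective hsurj
      _ = Cardinal.mk 𝓑 * Cardinal.mk 𝓒 := by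
          rw [Cardinal.mk_prod, Cardinal.lift_id, Cardinal.lift_id]

/-- Iterating the step lemma. -/
lemma chain_lemma (f g : ℕ → ℕ) (hg : ∀ k, 1 ≤ g k) (hfg : ∀ k, g k < f k)
    (𝓑 : Set (ℕ → Finset ℕ)) (hB1 : ∀ B ∈ 𝓑, IsSlalom g B)
    (hB2 : ∀ x : ℕ → ℕ, (∀ k, x k < f k) → ∃ B ∈ 𝓑, Covers B x)
    (hinf : ℵ₀ ≤ Cardinal.mk 𝓑) (N m : ℕ)
    (hm : ∀ k, N * f k - g k ≤ m * (f k - g k)) :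
    ∀ j, ∃ 𝓕 : Set (ℕ → Finset ℕ), (∀ B ∈ 𝓕, IsSlalom g B) ∧
      (∀ x : ℕ → ℕ, (∀ k, x k < g k + (N * f k - g k - (m - j) * (f k - g k))) →
        ∃ B ∈ 𝓕, Covers B x) ∧
      Cardinal.mk 𝓕 ≤ Cardinal.mk 𝓑 := by
  intro j
  induction j with
  | zero =>
    refine ⟨{fun k => Finset.range (g k)}, ?_, ?_, ?_⟩
    · rintro B rfl k
      exact Finset.card_range (g k)
    · intro x hx
      refine ⟨fun k => Finset.range (g k), rfl, ?_⟩
      intro k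
      have h0 : N * f k - g k - (m - 0) * (f k - g k) = 0 := by
        have hmk := hm k
        rw [Nat.sub_zero]
        omega
      have := hx k
      rw [h0] at this
      exact Finset.mem_range.mpr (by omega)
    · rw [Cardinal.mk_singleton]
      exact le_trans (le_of_lt Cardinal.one_lt_aleph0) hinf
  | succ j ih =>
    obtain ⟨𝓒, hC1, hC2, hCle⟩ := ih
    set t : ℕ → ℕ := fun k => N * f k - g k - (m - (j + 1)) * (f k - g k) with ht
    have hC2' : ∀ x : ℕ → ℕ, (∀ k, x k < g k + (t k - (f k - g k))) → ∃ C ∈ 𝓒, Covers C x := by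
      intro x hx
      apply hC2
      intro k
      refine lt_of_lt_of_le (hx k) ?_
      apply Nat.add_le_add_left
      -- t k - (f k - g k) ≤ N * f k - g k - (m - j) * (f k - g k)
      rw [ht]
      simp only []
      rw [Nat.sub_sub]
      apply Nat.sub_le_sub_left
      calc (m - j) * (f k - g k) ≤ (m - (j + 1) + 1) * (f k - g k) := by
            apply Nat.mul_le_mul_right
            omega
        _ = (m - (j + 1)) * (f k - g k) + (f k - g k) := by ring
    obtain ⟨𝓓, hD1, hD2, hDle⟩ :=
      step_lemma f g hfg 𝓑 hB1 hB2 t 𝓒 hC1 hC2'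
    refine ⟨𝓓, hD1, ?_, ?_⟩
    · intro x hx
      exact hD2 x (fun k => hx k)
    · refine le_trans hDle ?_
      calc Cardinal.mk 𝓑 * Cardinal.mk 𝓒 ≤ Cardinal.mk 𝓑 * Cardinal.mk 𝓑 :=
            mul_le_mul_right hCle _
        _ = Cardinal.mk 𝓑 := Cardinal.mul_eq_self hinf

theorem slalomCov_nmul_eq (f g : ℕ → ℕ) (hg : ∀ k, 1 ≤ g k)
    (ε : ℝ) (hε : 0 < ε) (h : ∀ k, (1 + ε) * (g k : ℝ) ≤ (f k : ℝ)) :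
    ∀ n : ℕ, 1 ≤ n → slalomCov (fun k => n * f k) g = slalomCov f g := by
  have hfg : ∀ k, g k < f k := by
    intro k
    have hgk : (1 : ℝ) ≤ (g k : ℝ) := by exact_mod_cast hg k
    have : (g k : ℝ) < (f k : ℝ) := by nlinarith [h k]
    exact_mod_cast this
  intro n hn
  apply le_antisymm
  · -- hard direction: slalomCov (n*f) g ≤ slalomCov f g
    obtain ⟨𝓑, h1, h2, h3⟩ := exists_min_family f g hg
    have hinf : ℵ₀ ≤ Cardinal.mk 𝓑 := aleph0_le_family f g hfg h1 h2
    set m : ℕ := ⌈(n : ℝ) * (1 + ε) / ε⌉₊ with hmdef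
    have hm : ∀ k, n * f k - g k ≤ m * (f k - g k) := by
      intro k
      have hstrong : (n : ℝ) * (f k : ℝ) ≤ (m : ℝ) * ((f k : ℝ) - (g k : ℝ)) := by
        have hceil : (n : ℝ) * (1 + ε) / ε ≤ (m : ℝ) := Nat.le_ceil _
        have hεm : (n : ℝ) * (1 + ε) ≤ (m : ℝ) * ε := by
          rw [div_le_iff₀ hε] at hceil
          linarith
        have hslack : ε * (f k : ℝ) ≤ (1 + ε) * ((f k : ℝ) - (g k : ℝ)) := by
          nlinarith [h k]
        have hfnn : (0 : ℝ) ≤ (f k : ℝ) - (g k : ℝ) := by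
          have := hfg k
          have : (g k : ℝ) ≤ (f k : ℝ) := by exact_mod_cast le_of_lt this
          linarith
        have hnn : (0 : ℝ) ≤ (n : ℝ) := Nat.cast_nonneg n
        nlinarith
      have hcast : (n : ℝ) * (f k : ℝ) ≤ (m : ℝ) * ((f k : ℝ) - (g k : ℝ)) → 
          n * f k ≤ m * (f k - g k) := by
        intro hr
        have hle : g k ≤ f k := le_of_lt (hfg k)
        have : ((n * f k : ℕ) : ℝ) ≤ ((m * (f k - g k) : ℕ) : ℝ) := by
          push_cast [Nat.cast_sub hle]
          push_cast at hr
          linarith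
        exact_mod_cast this
      have := hcast hstrong
      omega
    obtain ⟨𝓕, hF1, hF2, hFle⟩ :=
      chain_lemma f g hg hfg 𝓑 h1 h2 hinf n m hm m
    have hcov : ∀ x : ℕ → ℕ, (∀ k, x k < n * f k) → ∃ B ∈ 𝓕, Covers B x := by
      intro x hx
      apply hF2
      intro k
      have hle : f k ≤ n * f k := Nat.le_mul_of_pos_left _ hn
      have hgle : g k ≤ n * f k := le_trans (le_of_lt (hfg k)) hle
      have := hx k
      have hmm : m - m = 0 := Nat.sub_self m
      rw [hmm]
      simp only [Nat.zero_mul, Nat.sub_zero]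
      omega
    calc slalomCov (fun k => n * f k) g ≤ Cardinal.mk 𝓕 :=
          slalomCov_le (fun k => n * f k) g hF1 hcov
      _ ≤ Cardinal.mk 𝓑 := hFle
      _ = slalomCov f g := h3
  · -- easy direction: slalomCov f g ≤ slalomCov (n*f) g
    obtain ⟨𝓑, h1, h2, h3⟩ := exists_min_family (fun k => n * f k) g hg
    rw [← h3]
    apply slalomCov_le f g h1
    intro x hx
    apply h2
    intro k
    exact lt_of_lt_of_le (hx k) (Nat.le_mul_of_pos_left _ hn)
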